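/- Let γ > 1, R⁻ > 0, C₀ > 0 and s ∈ (0, κ(γ)·c_s(R⁻)). Then there exist ε₀ > 0 and a constant C₃ > 0 (independent of ε) such that for every ε ∈ (0, ε₀) and every function R satisfying the profile hypotheses (H_ε), the function ω(x) = (s/2)(1/f₁)'(x) − g(x)/f₁(x) satisfies ω(x) ≥ C₃|R'(x)| for all x ∈ ℝ. -/

import Mathlib

open Real Filter Topology

/-- The enthalpy for `γ > 1`: `h(ρ) = γ/(γ-1)·ρ^(γ-1)`. -/
noncomputable def enth (γ ρ : ℝ) : ℝ := γ / (γ - 1) * ρ ^ (γ - 1)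

/-- The sound speed `c_s(ρ) = √(γ ρ^(γ-1))`. -/
noncomputable def soundSpeed (γ ρ : ℝ) : ℝ := Real.sqrt (γ * ρ ^ (γ - 1))

/-- The mass flux `A(ε)` of a shock of amplitude `ε` with left state `Rm`. -/
noncomputable def Aflux (γ Rm ε : ℝ) : ℝ :=
  ((Rm - ε) * Rm / Real.sqrt (2 * Rm - ε)) *
    Real.sqrt (2 * (enth γ Rm - enth γ (Rm - ε)) / ε)

/-- The profile hypotheses (H_ε): `R` is `C²`, takes values in `[R⁻ - ε, R⁻]`, is strictly
decreasing with `R' < 0`, and satisfies `|R'| ≤ C₀ε²`, `|R''| ≤ C₀ε|R'|`. -/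
def Hprof (C₀ ε Rm : ℝ) (R : ℝ → ℝ) : Prop :=
  ContDiff ℝ 2 R ∧
  (∀ x : ℝ, Rm - ε ≤ R x ∧ R x ≤ Rm ∧ deriv R x < 0) ∧
  (∀ x : ℝ, |deriv R x| ≤ C₀ * ε ^ 2 ∧ |deriv (deriv R) x| ≤ C₀ * ε * |deriv R x|)

/-- The threshold constant `κ(γ)` for the admissible shock speeds. -/
noncomputable def kappa (γ : ℝ) : ℝ :=
  if γ ≤ 3 then (5 - Real.sqrt (7 - 2 * γ)) / 2 else 2

noncomputable def fA (γ s a r : ℝ) : ℝ := γ * r ^ (γ - 1) - (s - a / r) ^ 2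
noncomputable def dfA (γ s a r : ℝ) : ℝ :=
  γ * (γ - 1) * r ^ (γ - 2) - 2 * (s - a / r) * (a / r ^ 2)
noncomputable def Phi (γ s a r : ℝ) : ℝ :=
  s / 2 * dfA γ s a r / (fA γ s a r) ^ 2 + (2 * a - s * r) / (r ^ 2 * fA γ s a r)

lemma hasDerivAt_fA_comp (γ s a : ℝ) (R : ℝ → ℝ) (x : ℝ)
    (hR : HasDerivAt R (deriv R x) x) (hpos : 0 < R x) :
    HasDerivAt (fun y => fA γ s a (R y)) (dfA γ s a (R x) * deriv R x) x := by
  have hne : R x ≠ 0 := ne_of_gt hpos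
  have h1 : HasDerivAt (fun y => R y ^ (γ - 1))
      (deriv R x * (γ - 1) * R x ^ (γ - 1 - 1)) x := hR.rpow_const (Or.inl hne)
  have h2 : HasDerivAt (fun y => a / R y)
      ((0 * R x - a * deriv R x) / R x ^ 2) x := (hasDerivAt_const x a).div hR hne
  have h3 := ((hasDerivAt_const x s).sub h2).pow 2
  have h4 := (h1.const_mul γ).sub h3
  refine h4.congr_deriv ?_
  unfold dfA
  show γ * (deriv R x * (γ - 1) * R x ^ (γ - 1 - 1)) - 2 * (s - a / R x) ^ 1 * (0 - (0 * R x - a * deriv R x) / R x ^ 2) = (γ * (γ - 1) * R x ^ (γ - 2) - 2 * (s - a / R x) * (a / R x ^ 2)) * deriv R x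
  rw [show γ - 1 - 1 = γ - 2 by ring]
  field_simp
  ring

lemma contF (γ s : ℝ) (z : ℝ × ℝ) (hz : z.2 ≠ 0) :
    ContinuousAt (fun p : ℝ × ℝ => fA γ s p.1 p.2) z := by
  unfold fA
  have h1 : ContinuousAt (fun p : ℝ × ℝ => p.2 ^ (γ - 1)) z :=
    continuousAt_snd.rpow_const (Or.inl hz)
  have h2 : ContinuousAt (fun p : ℝ × ℝ => p.1 / p.2) z :=
    continuousAt_fst.div continuousAt_snd hz
  exact (h1.const_mul γ).sub ((continuousAt_const.sub h2).pow 2)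

lemma contP (γ s : ℝ) (z : ℝ × ℝ) (hz : z.2 ≠ 0) (hzf : fA γ s z.1 z.2 ≠ 0) :
    ContinuousAt (fun p : ℝ × ℝ => Phi γ s p.1 p.2) z := by
  have hF := contF γ s z hz
  have h2 : ContinuousAt (fun p : ℝ × ℝ => p.1 / p.2) z :=
    continuousAt_fst.div continuousAt_snd hz
  have hdF : ContinuousAt (fun p : ℝ × ℝ => dfA γ s p.1 p.2) z := by
    unfold dfA
    have h1 : ContinuousAt (fun p : ℝ × ℝ => p.2 ^ (γ - 2)) z :=
      continuousAt_snd.rpow_const (Or.inl hz)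
    have h3 : ContinuousAt (fun p : ℝ × ℝ => p.1 / p.2 ^ 2) z :=
      continuousAt_fst.div (continuousAt_snd.pow 2) (pow_ne_zero 2 hz)
    exact (h1.const_mul _).sub (((continuousAt_const.sub h2).const_mul 2).mul h3)
  unfold Phi
  exact ((hdF.const_mul _).div (hF.pow 2) (pow_ne_zero 2 hzf)).add
    (((continuousAt_fst.const_mul 2).sub (continuousAt_snd.const_mul s)).div
      ((continuousAt_snd.pow 2).mul hF) (mul_ne_zero (pow_ne_zero 2 hz) hzf))

lemma fA_val (γ s c Rm : ℝ) (hγ : γ ≠ 0) (hRm : Rm ≠ 0)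
    (hK1 : Rm ^ (γ - 1) = c ^ 2 / γ) :
    fA γ s (Rm * c) Rm = c ^ 2 - (s - c) ^ 2 := by
  unfold fA
  rw [hK1]
  field_simp

lemma phi_val (γ s c Rm : ℝ) (hγ : γ ≠ 0) (hRm : Rm ≠ 0) (hf : c ^ 2 - (s - c) ^ 2 ≠ 0)
    (hK1 : Rm ^ (γ - 1) = c ^ 2 / γ) (hK2 : Rm ^ (γ - 2) = c ^ 2 / (γ * Rm)) :
    Phi γ s (Rm * c) Rm =
      s * (s ^ 2 - 5 * c * s + (γ + 9) / 2 * c ^ 2) / (Rm * (c ^ 2 - (s - c) ^ 2) ^ 2) := by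
  unfold Phi dfA
  rw [fA_val γ s c Rm hγ hRm hK1, hK2]
  have h1 : Rm * c / Rm = c := by field_simp
  rw [h1]
  field_simp
  ring

lemma tendsto_Aflux (γ Rm : ℝ) (hγ : 1 < γ) (hRm : 0 < Rm) :
    Tendsto (Aflux γ Rm) (𝓝[>] 0) (𝓝 (Rm * soundSpeed γ Rm)) := by
  have hγ1 : γ - 1 ≠ 0 := by linarith
  have hd : HasDerivAt (enth γ) (γ * Rm ^ (γ - 2)) Rm := by
    have h := (Real.hasDerivAt_rpow_const (x := Rm) (p := γ - 1)
      (Or.inl hRm.ne')).const_mul (γ / (γ - 1))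
    refine h.congr_deriv ?_
    rw [show γ - 1 - 1 = γ - 2 by ring]
    field_simp
  rw [hasDerivAt_iff_tendsto_slope] at hd
  have hmap : Tendsto (fun ε : ℝ => Rm - ε) (𝓝[>] (0:ℝ)) (𝓝[≠] Rm) := by
    apply tendsto_nhdsWithin_of_tendsto_nhds_of_eventually_within
    · have h : Tendsto (fun ε : ℝ => Rm - ε) (𝓝 0) (𝓝 (Rm - 0)) :=
        tendsto_const_nhds.sub tendsto_id
      simpa using h.mono_left nhdsWithin_le_nhds
    · filter_upwards [self_mem_nhdsWithin] with ε hε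
      simp only [Set.mem_Ioi] at hε
      simp only [Set.mem_compl_iff, Set.mem_singleton_iff]
      intro h
      have : ε = 0 := by linarith [sub_eq_self.mp h]
      linarith
  have hslope := hd.comp hmap
  have hslope' : Tendsto (fun ε : ℝ => 2 * (enth γ Rm - enth γ (Rm - ε)) / ε) (𝓝[>] 0)
      (𝓝 (2 * (γ * Rm ^ (γ - 2)))) := by
    apply (hslope.const_mul 2).congr'
    filter_upwards [self_mem_nhdsWithin] with ε hε
    simp only [Set.mem_Ioi] at hε
    simp only [Function.comp, slope_def_field]
    field_simp [hε.ne']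
    ring
  have hsq : Tendsto (fun ε : ℝ => Real.sqrt (2 * (enth γ Rm - enth γ (Rm - ε)) / ε))
      (𝓝[>] 0) (𝓝 (Real.sqrt (2 * (γ * Rm ^ (γ - 2))))) :=
    (Real.continuous_sqrt.tendsto _).comp hslope'
  have hfront : Tendsto (fun ε : ℝ => (Rm - ε) * Rm / Real.sqrt (2 * Rm - ε)) (𝓝[>] 0)
      (𝓝 ((Rm - 0) * Rm / Real.sqrt (2 * Rm - 0))) := by
    apply Tendsto.mono_left _ nhdsWithin_le_nhds
    have hc : ContinuousAt (fun ε : ℝ => (Rm - ε) * Rm / Real.sqrt (2 * Rm - ε)) 0 := by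
      apply ContinuousAt.div
      · fun_prop
      · exact Real.continuous_sqrt.continuousAt.comp (by fun_prop)
      · simp only [sub_zero]
        positivity
    simpa using hc.tendsto
  have htot := hfront.mul hsq
  have hval : (Rm - 0) * Rm / Real.sqrt (2 * Rm - 0) * Real.sqrt (2 * (γ * Rm ^ (γ - 2)))
      = Rm * soundSpeed γ Rm := by
    have hpow : Rm ^ (γ - 2) = Rm ^ (γ - 1) / Rm := by
      rw [show γ - 2 = γ - 1 - 1 by ring, Real.rpow_sub hRm, Real.rpow_one]
    have hKpos : (0:ℝ) < Rm ^ (γ - 1) := Real.rpow_pos_of_pos hRm _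
    have h2Rm : (0:ℝ) < 2 * Rm := by linarith
    rw [hpow, sub_zero, sub_zero,
      show 2 * (γ * (Rm ^ (γ - 1) / Rm)) = (2 * Rm) * (γ * Rm ^ (γ - 1)) / (Rm * Rm) by
        field_simp,
      Real.sqrt_div (by positivity), Real.sqrt_mul h2Rm.le, Real.sqrt_mul_self hRm.le,
      soundSpeed]
    have hs2 : Real.sqrt (2 * Rm) ≠ 0 := ne_of_gt (Real.sqrt_pos.mpr h2Rm)
    field_simp
  rw [hval] at htot
  exact htot.congr (fun ε => rfl)

/-- Positivity of the dispersive coefficient `ω` (Lemma 3.4). -/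
theorem stmt4 (γ Rm C₀ s : ℝ) (hγ : 1 < γ) (hRm : 0 < Rm) (hC₀ : 0 < C₀)
    (hs : 0 < s) (hs2 : s < kappa γ * soundSpeed γ Rm) :
    ∃ ε₀ > (0:ℝ), ∃ C₃ > (0:ℝ), ∀ ε : ℝ, 0 < ε → ε < ε₀ →
      ∀ R : ℝ → ℝ, Hprof C₀ ε Rm R →
        let f₁ : ℝ → ℝ := fun x => γ * R x ^ (γ - 1) - (s - Aflux γ Rm ε / R x) ^ 2
        let g : ℝ → ℝ := fun x => (2 * Aflux γ Rm ε - s * R x) * deriv R x / (R x) ^ 2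
        let ω : ℝ → ℝ := fun x => (s / 2) * deriv (fun y => 1 / f₁ y) x - g x / f₁ x
        ∀ x : ℝ, ω x ≥ C₃ * |deriv R x| := by
  have hγ0 : γ ≠ 0 := by linarith
  have hγ1 : (0:ℝ) < γ - 1 := by linarith
  set c := soundSpeed γ Rm with hcdef
  have hKpos : (0:ℝ) < γ * Rm ^ (γ - 1) := by
    have := Real.rpow_pos_of_pos hRm (γ - 1); positivity
  have hc0 : 0 < c := Real.sqrt_pos.mpr hKpos
  have hc2 : c ^ 2 = γ * Rm ^ (γ - 1) := Real.sq_sqrt hKpos.le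
  have hK1 : Rm ^ (γ - 1) = c ^ 2 / γ := by rw [hc2]; field_simp
  have hK2 : Rm ^ (γ - 2) = c ^ 2 / (γ * Rm) := by
    rw [show γ - 2 = γ - 1 - 1 by ring, Real.rpow_sub hRm, Real.rpow_one, hK1]
    ring
  -- s < 2c
  have hκ2 : kappa γ ≤ 2 := by
    unfold kappa
    split_ifs with h
    · have h1le : (1:ℝ) ≤ Real.sqrt (7 - 2 * γ) := by
        rw [show (1:ℝ) = Real.sqrt 1 by simp]
        exact Real.sqrt_le_sqrt (by linarith)
      linarith
    · exact le_refl _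
  have hs2c : s < 2 * c := by
    calc s < kappa γ * c := hs2
    _ ≤ 2 * c := mul_le_mul_of_nonneg_right hκ2 hc0.le
  -- the quadratic Q is positive
  have hQ : 0 < s ^ 2 - 5 * c * s + (γ + 9) / 2 * c ^ 2 := by
    by_cases hγ3 : γ ≤ 3
    · have hd : Real.sqrt (7 - 2 * γ) ^ 2 = 7 - 2 * γ := Real.sq_sqrt (by linarith)
      set d := Real.sqrt (7 - 2 * γ) with hddef
      have hd0 : 0 ≤ d := Real.sqrt_nonneg _
      have hsκ : s < (5 - d) / 2 * c := by
        rw [kappa, if_pos hγ3] at hs2; exact hs2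
      have h1 : 0 < (5 - d) / 2 * c - s := by linarith
      have h2 : 0 < (5 + d) / 2 * c - s := by nlinarith [mul_nonneg hd0 hc0.le]
      have hdc : d ^ 2 * c ^ 2 = (7 - 2 * γ) * c ^ 2 := by rw [hd]
      nlinarith [mul_pos h1 h2, hdc]
    · push_neg at hγ3
      have h1 : 0 < 2 * c - s := by linarith
      have h2 : 0 < 3 * c - s := by linarith
      nlinarith [mul_pos h1 h2, mul_pos (by linarith : (0:ℝ) < γ - 3) (pow_pos hc0 2)]
  have hf0 : 0 < c ^ 2 - (s - c) ^ 2 := by nlinarith [mul_pos hs (by linarith : 0 < 2 * c - s)]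
  have hfAz : 0 < fA γ s (Rm * c) Rm := by
    rw [fA_val γ s c Rm hγ0 hRm.ne' hK1]; exact hf0
  have hP : 0 < Phi γ s (Rm * c) Rm := by
    rw [phi_val γ s c Rm hγ0 hRm.ne' hf0.ne' hK1 hK2]
    exact div_pos (mul_pos hs hQ) (mul_pos hRm (pow_pos hf0 2))
  -- neighbourhood where fA > 0 and Phi > P/2
  have hev : ∀ᶠ p : ℝ × ℝ in 𝓝 (Rm * c, Rm),
      0 < fA γ s p.1 p.2 ∧ Phi γ s (Rm * c) Rm / 2 < Phi γ s p.1 p.2 := by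
    have h1 := (contF γ s (Rm * c, Rm) hRm.ne').eventually (eventually_gt_nhds hfAz)
    have h2 := (contP γ s (Rm * c, Rm) hRm.ne' hfAz.ne').eventually
      (eventually_gt_nhds (by linarith : Phi γ s (Rm * c) Rm / 2 < Phi γ s (Rm * c) Rm))
    exact h1.and h2
  rw [Metric.eventually_nhds_iff] at hev
  obtain ⟨δ, hδ0, hδ⟩ := hev
  have hevA : ∀ᶠ ε in 𝓝[>] (0:ℝ), dist (Aflux γ Rm ε) (Rm * c) < δ :=
    Metric.tendsto_nhds.mp (tendsto_Aflux γ Rm hγ hRm) δ hδ0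
  rw [eventually_nhdsWithin_iff, Metric.eventually_nhds_iff] at hevA
  obtain ⟨ε₁, hε₁0, hε₁⟩ := hevA
  refine ⟨min (min ε₁ δ) (Rm / 2), lt_min (lt_min hε₁0 hδ0) (by positivity),
    Phi γ s (Rm * c) Rm / 2, by linarith, ?_⟩
  intro ε hε hεlt R hH
  obtain ⟨hC2, hbound, hder2⟩ := hH
  have hεε₁ : ε < ε₁ := lt_of_lt_of_le hεlt (le_trans (min_le_left _ _) (min_le_left _ _))
  have hεδ : ε < δ := lt_of_lt_of_le hεlt (le_trans (min_le_left _ _) (min_le_right _ _))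
  have hεRm : ε < Rm / 2 := lt_of_lt_of_le hεlt (min_le_right _ _)
  intro f₁ g ω x
  obtain ⟨hR1, hR2, hR3⟩ := hbound x
  have hRxpos : 0 < R x := by linarith
  have hAdist : dist (Aflux γ Rm ε) (Rm * c) < δ := by
    apply hε₁
    · rw [Real.dist_eq, sub_zero, abs_of_pos hε]; exact hεε₁
    · exact hε
  have hpd : dist (Aflux γ Rm ε, R x) (Rm * c, Rm) < δ := by
    rw [Prod.dist_eq]
    apply max_lt hAdist
    rw [Real.dist_eq, abs_of_nonpos (by linarith)]
    linarith
  obtain ⟨hfpos, hPhi⟩ := hδ hpd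
  have hRd : HasDerivAt R (deriv R x) x :=
    ((hC2.differentiable (by norm_num)) x).hasDerivAt
  have hdf := hasDerivAt_fA_comp γ s (Aflux γ Rm ε) R x hRd hRxpos
  have hinv := hdf.inv hfpos.ne'
  have hderiv1 : deriv (fun y => 1 / f₁ y) x
      = -(dfA γ s (Aflux γ Rm ε) (R x) * deriv R x) / fA γ s (Aflux γ Rm ε) (R x) ^ 2 := by
    simp only [f₁, one_div]
    exact hinv.deriv
  show ω x ≥ _
  simp only [ω, g, f₁, hderiv1]
  rw [show γ * R x ^ (γ - 1) - (s - Aflux γ Rm ε / R x) ^ 2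
      = fA γ s (Aflux γ Rm ε) (R x) from rfl]
  have halg : s / 2 * (-(dfA γ s (Aflux γ Rm ε) (R x) * deriv R x)
        / fA γ s (Aflux γ Rm ε) (R x) ^ 2)
      - (2 * Aflux γ Rm ε - s * R x) * deriv R x / R x ^ 2 / fA γ s (Aflux γ Rm ε) (R x)
      = (-(deriv R x)) * Phi γ s (Aflux γ Rm ε) (R x) := by
    unfold Phi
    field_simp
    ring
  rw [halg, abs_of_neg hR3]
  have h0 : 0 ≤ -(deriv R x) := by linarith
  calc Phi γ s (Rm * c) Rm / 2 * -deriv R x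
      ≤ Phi γ s (Aflux γ Rm ε) (R x) * -deriv R x :=
        mul_le_mul_of_nonneg_right hPhi.le h0
    _ = -(deriv R x) * Phi γ s (Aflux γ Rm ε) (R x) := by ring
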